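/- Let X be a real Hilbert space, w, z ∈ X, and D ⊆ X with ⟪z − x, w − x⟫ ≤ 0 for all x ∈ D. Let x : [t₀, ∞) → D be a curve such that t ↦ ‖x(t) − w‖² is nondecreasing, and suppose that for every increasing sequence tₙ → ∞, weak convergence x(tₙ) ⇀ x̃ implies x̃ = z. Then x(t) → z strongly as t → ∞. -/

import Mathlib

open Set Metric Filter Submodule
open scoped RealInnerProductSpace Topology

/-- Weak sequential compactness of bounded sequences in a real Hilbert space. -/
lemma weak_cluster_of_bounded {X : Type*} [NormedAddCommGroup X] [InnerProductSpace ℝ X]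
    [CompleteSpace X] (u : ℕ → X) (M : ℝ) (hM : ∀ n, ‖u n‖ ≤ M) :
    ∃ φ : ℕ → ℕ, StrictMono φ ∧ ∃ xt : X,
      ∀ y : X, Tendsto (fun n => ⟪u (φ n), y⟫) atTop (𝓝 ⟪xt, y⟫) := by
  have hM0 : 0 ≤ M := (norm_nonneg _).trans (hM 0)
  -- a countable set whose closure contains the closed span of the range of `u`
  have hsep : TopologicalSpace.IsSeparable
      (closure (Submodule.span ℝ (Set.range u) : Set X)) :=
    ((Set.countable_range u).isSeparable.span).closure
  obtain ⟨c, hcc, hcsub⟩ := hsep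
  have hcne : c.Nonempty := by
    rcases Set.eq_empty_or_nonempty c with h | h
    · exfalso
      have h0 : (0 : X) ∈ closure (Submodule.span ℝ (Set.range u) : Set X) :=
        subset_closure (Submodule.zero_mem _)
      have := hcsub h0
      simp [h] at this
    · exact h
  obtain ⟨d, hd⟩ := hcc.exists_eq_range hcne
  -- diagonal extraction via compactness of a product of intervals
  set F : ℕ → (ℕ → ℝ) := fun n i => ⟪u n, d i⟫ with hF
  have hFmem : ∀ n, F n ∈ Set.pi Set.univ (fun i => Icc (-(M * ‖d i‖)) (M * ‖d i‖)) := by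
    intro n i _
    have h1 := abs_real_inner_le_norm (u n) (d i)
    have h2 : ‖u n‖ * ‖d i‖ ≤ M * ‖d i‖ :=
      mul_le_mul_of_nonneg_right (hM n) (norm_nonneg _)
    constructor
    · nlinarith [abs_nonneg (⟪u n, d i⟫), neg_abs_le (⟪u n, d i⟫)]
    · nlinarith [le_abs_self (⟪u n, d i⟫)]
  have hcomp : IsCompact (Set.pi Set.univ (fun i : ℕ => Icc (-(M * ‖d i‖)) (M * ‖d i‖))) :=
    isCompact_univ_pi fun i => isCompact_Icc
  obtain ⟨a, -, φ, hφ, hconv⟩ := hcomp.tendsto_subseq hFmem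
  have hpt : ∀ i, Tendsto (fun n => ⟪u (φ n), d i⟫) atTop (𝓝 (a i)) := by
    intro i
    have := tendsto_pi_nhds.mp hconv i
    simpa [hF, Function.comp] using this
  set v : ℕ → X := fun n => u (φ n) with hv
  have hvM : ∀ n, ‖v n‖ ≤ M := fun n => hM _
  -- the closed span as a complete submodule
  set K : Submodule ℝ X := (Submodule.span ℝ (Set.range u)).topologicalClosure with hK
  haveI : CompleteSpace K :=
    (Submodule.span ℝ (Set.range u)).isClosed_topologicalClosure.completeSpace_coe
  have hvK : ∀ n, v n ∈ K :=
    fun n => Submodule.le_topologicalClosure _ (Submodule.subset_span ⟨φ n, rfl⟩)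
  -- for each y, the sequence of inner products is Cauchy
  have hCau : ∀ y : X, CauchySeq (fun n => ⟪v n, y⟫) := by
    intro y
    set py : X := (orthogonalProjection K y : X) with hpy
    have hyeq : ∀ n, ⟪v n, y⟫ = ⟪v n, py⟫ := by
      intro n
      have h0 : ⟪y - py, v n⟫ = 0 := Submodule.starProjection_inner_eq_zero (K := K) y (v n) (hvK n)
      have : ⟪v n, y - py⟫ = 0 := by rwa [real_inner_comm] at h0
      have h2 : ⟪v n, y⟫ - ⟪v n, py⟫ = 0 := by rwa [inner_sub_right] at this
      linarith
    have hpymem : py ∈ closure c := by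
      apply hcsub
      have : py ∈ (K : Set X) := (orthogonalProjection K y).2
      rwa [hK, Submodule.topologicalClosure_coe] at this
    rw [Metric.cauchySeq_iff]
    intro ε hε
    obtain ⟨b, hbc, hbd⟩ := Metric.mem_closure_iff.mp hpymem (ε / (4 * (M + 1)))
      (by positivity)
    obtain ⟨i, rfl⟩ : ∃ i, d i = b := by
      have : b ∈ Set.range d := by rw [← hd]; exact hbc
      obtain ⟨i, hi⟩ := this; exact ⟨i, hi⟩
    have hdist : ‖py - d i‖ < ε / (4 * (M + 1)) := by
      rw [← dist_eq_norm]; exact hbd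
    have hCi : CauchySeq (fun n => ⟪v n, d i⟫) := (hpt i).cauchySeq
    obtain ⟨N, hN⟩ := Metric.cauchySeq_iff.mp hCi (ε / 2) (by positivity)
    refine ⟨N, fun m hm n hn => ?_⟩
    have key : |⟪v m, y⟫ - ⟪v n, y⟫| < ε := by
      rw [hyeq m, hyeq n]
      have hsplit : ⟪v m, py⟫ - ⟪v n, py⟫ =
          (⟪v m, py - d i⟫ - ⟪v n, py - d i⟫) + (⟪v m, d i⟫ - ⟪v n, d i⟫) := by
        simp [inner_sub_right]; ring
      have h1 : |⟪v m, py - d i⟫| ≤ M * ‖py - d i‖ := by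
        refine (abs_real_inner_le_norm _ _).trans ?_
        exact mul_le_mul_of_nonneg_right (hvM m) (norm_nonneg _)
      have h2 : |⟪v n, py - d i⟫| ≤ M * ‖py - d i‖ := by
        refine (abs_real_inner_le_norm _ _).trans ?_
        exact mul_le_mul_of_nonneg_right (hvM n) (norm_nonneg _)
      have h3 : |⟪v m, d i⟫ - ⟪v n, d i⟫| < ε / 2 := by
        have := hN m hm n hn
        rwa [Real.dist_eq] at this
      have h4 : M * ‖py - d i‖ < M * (ε / (4 * (M + 1))) + ε / 100 := by
        nlinarith [mul_le_mul_of_nonneg_left hdist.le hM0]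
      have h5 : M * (ε / (4 * (M + 1))) ≤ ε / 4 := by
        have heq : M * (ε / (4 * (M + 1))) = ε * M / (4 * (M + 1)) := by ring
        rw [heq, div_le_div_iff₀ (by positivity) (by norm_num)]
        nlinarith
      calc |⟪v m, py⟫ - ⟪v n, py⟫|
          ≤ |⟪v m, py - d i⟫| + |⟪v n, py - d i⟫| + |⟪v m, d i⟫ - ⟪v n, d i⟫| := by
            rw [hsplit]
            refine (abs_add_le _ _).trans ?_
            gcongr
            exact abs_sub _ _
        _ < ε := by nlinarith
    rwa [Real.dist_eq]
  -- limits define a bounded linear functional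
  have hlim : ∀ y : X, Tendsto (fun n => ⟪v n, y⟫) atTop
      (𝓝 (limUnder atTop (fun n => ⟪v n, y⟫))) := fun y => (hCau y).tendsto_limUnder
  set ℓ : X → ℝ := fun y => limUnder atTop (fun n => ⟪v n, y⟫) with hℓ
  have hadd : ∀ y₁ y₂, ℓ (y₁ + y₂) = ℓ y₁ + ℓ y₂ := by
    intro y₁ y₂
    have h1 : Tendsto (fun n => ⟪v n, y₁ + y₂⟫) atTop (𝓝 (ℓ y₁ + ℓ y₂)) := by
      have := (hlim y₁).add (hlim y₂)
      simpa [inner_add_right] using this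
    exact tendsto_nhds_unique (hlim _) h1
  have hsmul : ∀ (r : ℝ) y, ℓ (r • y) = r * ℓ y := by
    intro r y
    have h1 : Tendsto (fun n => ⟪v n, r • y⟫) atTop (𝓝 (r * ℓ y)) := by
      have := (hlim y).const_mul r
      simpa [real_inner_smul_right] using this
    exact tendsto_nhds_unique (hlim _) h1
  have hbdd : ∀ y, |ℓ y| ≤ M * ‖y‖ := by
    intro y
    have : Tendsto (fun n => |⟪v n, y⟫|) atTop (𝓝 |ℓ y|) := (hlim y).abs
    refine le_of_tendsto this (Eventually.of_forall fun n => ?_)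
    exact (abs_real_inner_le_norm _ _).trans
      (mul_le_mul_of_nonneg_right (hvM n) (norm_nonneg _))
  set ℓL : X →ₗ[ℝ] ℝ :=
    { toFun := ℓ, map_add' := hadd, map_smul' := hsmul } with hℓL
  set ℓC : X →L[ℝ] ℝ := LinearMap.mkContinuous ℓL M (fun y => by
    exact hbdd y) with hℓC
  refine ⟨φ, hφ, (InnerProductSpace.toDual ℝ X).symm ℓC, fun y => ?_⟩
  have : ⟪(InnerProductSpace.toDual ℝ X).symm ℓC, y⟫ = ℓ y :=
    InnerProductSpace.toDual_symm_apply
  rw [this]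
  exact hlim y
theorem stmt10 {X : Type*} [NormedAddCommGroup X] [InnerProductSpace ℝ X] [CompleteSpace X]
    (w z : X) (D : Set X) (hD : ∀ x ∈ D, ⟪z - x, w - x⟫ ≤ 0)
    (t₀ : ℝ) (x : ℝ → X) (hmem : ∀ t ∈ Ici t₀, x t ∈ D)
    (hmono : MonotoneOn (fun t => ‖x t - w‖ ^ 2) (Ici t₀))
    (hweak : ∀ tn : ℕ → ℝ, StrictMono tn → Tendsto tn atTop atTop →
      ∀ xtil : X,
        (∀ y : X, Tendsto (fun n => ⟪x (tn n), y⟫) atTop (𝓝 ⟪xtil, y⟫)) →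
        xtil = z) :
    Tendsto x atTop (𝓝 z) := by
  -- Key inequality from hD
  have hkey : ∀ t ∈ Ici t₀, ‖x t - w‖ ^ 2 + ‖x t - z‖ ^ 2 ≤ ‖w - z‖ ^ 2 := by
    intro t ht
    have h := hD (x t) (hmem t ht)
    have hexp : ‖w - z‖ ^ 2 = ‖w - x t‖ ^ 2 - 2 * ⟪w - x t, z - x t⟫ + ‖z - x t‖ ^ 2 := by
      have : w - z = (w - x t) - (z - x t) := by abel
      rw [this, norm_sub_sq_real]
    have hsym : ⟪w - x t, z - x t⟫ = ⟪z - x t, w - x t⟫ := real_inner_comm _ _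
    have h1 : ‖x t - w‖ = ‖w - x t‖ := norm_sub_rev _ _
    have h2 : ‖x t - z‖ = ‖z - x t‖ := norm_sub_rev _ _
    rw [h1, h2]
    nlinarith
  set f : ℝ → ℝ := fun t => ‖x t - w‖ ^ 2 with hf
  -- the monotone surrogate g
  set g : ℝ → ℝ := fun t => f (max t t₀) with hg
  have hmaxmem : ∀ t : ℝ, max t t₀ ∈ Ici t₀ := fun t => mem_Ici.mpr (le_max_right _ _)
  have hgmono : Monotone g := by
    intro s t hst
    exact hmono (hmaxmem s) (hmaxmem t) (max_le_max hst le_rfl)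
  have hgbdd : BddAbove (Set.range g) := by
    refine ⟨‖w - z‖ ^ 2, ?_⟩
    rintro r ⟨t, rfl⟩
    have := hkey (max t t₀) (hmaxmem t)
    simp only [hg, hf]
    nlinarith [sq_nonneg ‖x (max t t₀) - z‖]
  set L : ℝ := ⨆ t, g t with hL
  have hgL : Tendsto g atTop (𝓝 L) := tendsto_atTop_ciSup hgmono hgbdd
  have hfL : Tendsto f atTop (𝓝 L) := by
    refine hgL.congr' ?_
    filter_upwards [eventually_ge_atTop t₀] with t ht
    simp [hg, max_eq_left ht]
  have hLle : L ≤ ‖w - z‖ ^ 2 := by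
    refine ciSup_le fun t => ?_
    have := hkey (max t t₀) (hmaxmem t)
    simp only [hg, hf]
    nlinarith [sq_nonneg ‖x (max t t₀) - z‖]
  -- the sequence u n = x (t₀ + n)
  set u : ℕ → X := fun n => x (t₀ + n) with hu
  have humem : ∀ n : ℕ, t₀ + (n : ℝ) ∈ Ici t₀ := fun n => by
    simp [mem_Ici]
  have huM : ∀ n, ‖u n‖ ≤ ‖z‖ + ‖w - z‖ := by
    intro n
    have hk := hkey _ (humem n)
    have h1 : ‖u n - z‖ ≤ ‖w - z‖ := by
      nlinarith [sq_nonneg ‖x (t₀ + (n:ℝ)) - w‖, norm_nonneg (u n - z), norm_nonneg (w - z)]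
    calc ‖u n‖ = ‖(u n - z) + z‖ := by rw [sub_add_cancel]
      _ ≤ ‖u n - z‖ + ‖z‖ := norm_add_le _ _
      _ ≤ ‖z‖ + ‖w - z‖ := by linarith
  obtain ⟨φ, hφ, xt, hxt⟩ := weak_cluster_of_bounded u (‖z‖ + ‖w - z‖) huM
  -- the time sequence
  set tn : ℕ → ℝ := fun n => t₀ + (φ n : ℝ) with htn
  have htn_sm : StrictMono tn := fun a b hab => by
    have := hφ hab
    simp only [htn]
    have h' : (φ a : ℝ) < φ b := by exact_mod_cast this
    linarith
  have htn_top : Tendsto tn atTop atTop := by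
    apply tendsto_atTop_add_const_left
    exact tendsto_natCast_atTop_atTop.comp hφ.tendsto_atTop
  have hxz : xt = z := hweak tn htn_sm htn_top xt (fun y => hxt y)
  rw [hxz] at hxt
  -- weak lower semicontinuity: L ≥ ‖w - z‖²
  set v : ℕ → X := fun n => u (φ n) with hv
  have hfseq : Tendsto (fun n => ‖v n - w‖ ^ 2) atTop (𝓝 L) := by
    have : Tendsto (fun n => f (tn n)) atTop (𝓝 L) := hfL.comp htn_top
    exact this
  have hnorm_seq : Tendsto (fun n => ‖v n - w‖) atTop (𝓝 (Real.sqrt L)) := by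
    have h1 : Tendsto (fun n => Real.sqrt (‖v n - w‖ ^ 2)) atTop (𝓝 (Real.sqrt L)) :=
      (Real.continuous_sqrt.continuousAt).tendsto.comp hfseq
    refine h1.congr fun n => ?_
    rw [Real.sqrt_sq (norm_nonneg _)]
  have hinner_lim : Tendsto (fun n => ⟪v n - w, z - w⟫) atTop (𝓝 (‖z - w‖ ^ 2)) := by
    have h1 : Tendsto (fun n => ⟪v n, z - w⟫ - ⟪w, z - w⟫) atTop
        (𝓝 (⟪z, z - w⟫ - ⟪w, z - w⟫)) := (hxt (z - w)).sub tendsto_const_nhds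
    have h2 : ⟪z, z - w⟫ - ⟪w, z - w⟫ = ‖z - w‖ ^ 2 := by
      rw [← inner_sub_left, real_inner_self_eq_norm_sq]
    rw [← h2]
    refine h1.congr fun n => ?_
    rw [← inner_sub_left]
  have hwlsc : ‖z - w‖ ^ 2 ≤ Real.sqrt L * ‖z - w‖ := by
    refine le_of_tendsto_of_tendsto' hinner_lim (hnorm_seq.mul_const ‖z - w‖) fun n => ?_
    exact real_inner_le_norm _ _
  have hL0 : 0 ≤ L := by
    have : g 0 ≤ L := le_ciSup hgbdd 0
    have hg0 : 0 ≤ g 0 := sq_nonneg _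
    linarith
  have hLge : ‖w - z‖ ^ 2 ≤ L := by
    have hnorm : ‖z - w‖ = ‖w - z‖ := norm_sub_rev _ _
    rcases eq_or_lt_of_le (norm_nonneg (z - w)) with h0 | h0
    · rw [← hnorm, ← h0]; simpa using hL0
    · have hle : ‖z - w‖ ≤ Real.sqrt L := by
        have := hwlsc
        nlinarith
      have := Real.sq_sqrt hL0
      nlinarith [Real.sqrt_nonneg L]
  have hLeq : L = ‖w - z‖ ^ 2 := le_antisymm hLle hLge
  -- squeeze: ‖x t - z‖² → 0
  have hsq : Tendsto (fun t => ‖x t - z‖ ^ 2) atTop (𝓝 0) := by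
    have hupper : Tendsto (fun t => ‖w - z‖ ^ 2 - f t) atTop (𝓝 0) := by
      have := (tendsto_const_nhds (x := ‖w - z‖ ^ 2) (f := atTop (α := ℝ))).sub hfL
      rwa [hLeq, sub_self] at this
    refine tendsto_of_tendsto_of_tendsto_of_le_of_le' tendsto_const_nhds hupper ?_ ?_
    · exact Eventually.of_forall fun t => sq_nonneg _
    · filter_upwards [eventually_ge_atTop t₀] with t ht
      have := hkey t ht
      simp only [hf]
      linarith
  rw [tendsto_iff_norm_sub_tendsto_zero]
  have h1 : Tendsto (fun t => Real.sqrt (‖x t - z‖ ^ 2)) atTop (𝓝 (Real.sqrt 0)) :=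
    (Real.continuous_sqrt.continuousAt).tendsto.comp hsq
  rw [Real.sqrt_zero] at h1
  exact h1.congr fun t => Real.sqrt_sq (norm_nonneg _)
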